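/- Let G be a simple graph on a countable vertex set and let W be a set of vertices of G. Then W is an independent subgraph of G if and only if there exists a perfect matching of the induced subgraph G[W] that is an independent matching of G. -/

import Mathlib

namespace PaperMatchings

variable {V : Type*}

/-- The support of a set of edges: all vertices incident to some edge in `M`. -/
def supp (M : Set (Sym2 V)) : Set V := {v | ∃ e ∈ M, v ∈ e}

/-- `M` is a matching of `G`: a set of edges of `G` such that no vertex is
incident to more than one edge of `M`. -/
def IsMatching (G : SimpleGraph V) (M : Set (Sym2 V)) : Prop :=
  M ⊆ G.edgeSet ∧ ∀ (v : V), ∀ e ∈ M, ∀ e' ∈ M, v ∈ e → v ∈ e' → e = e'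

/-- A perfect matching: a matching whose support is all of `V`. -/
def IsPerfectMatching (G : SimpleGraph V) (M : Set (Sym2 V)) : Prop :=
  IsMatching G M ∧ supp M = Set.univ

/-- A (finite or infinite) path in `G`, given by its number of vertices `n : ℕ∞`
(`⊤` meaning infinite) and the enumeration `f` of its vertices: it is injective on
indices below `n` and consecutive vertices are adjacent. -/
def IsPath (G : SimpleGraph V) (n : ℕ∞) (f : ℕ → V) : Prop :=
  1 ≤ n ∧
  (∀ i j : ℕ, (i : ℕ∞) < n → (j : ℕ∞) < n → f i = f j → i = j) ∧
  (∀ i : ℕ, ((i : ℕ∞) + 1) < n → G.Adj (f i) (f (i + 1)))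

/-- The consecutive edges of the path lie alternately in `M` and outside `M`. -/
def IsAlternating (M : Set (Sym2 V)) (n : ℕ∞) (f : ℕ → V) : Prop :=
  ∀ i : ℕ, ((i : ℕ∞) + 2) < n →
    (s(f i, f (i + 1)) ∈ M ↔ s(f (i + 1), f (i + 2)) ∉ M)

/-- An `M`-augmenting path starting at `s`: an `M`-alternating path (with at least one
edge) starting at the unmatched vertex `s`, which is either infinite or ends at an
unmatched vertex. -/
def IsAugmentingPath (G : SimpleGraph V) (M : Set (Sym2 V)) (n : ℕ∞) (f : ℕ → V)
    (s : V) : Prop :=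
  IsPath G n f ∧ IsAlternating M n f ∧ 1 < n ∧ f 0 = s ∧ s ∉ supp M ∧
  ∀ k : ℕ, n = (k : ℕ∞) + 1 → f k ∉ supp M

/-- The path contains at least one edge of `M`. -/
def IsProper (M : Set (Sym2 V)) (n : ℕ∞) (f : ℕ → V) : Prop :=
  ∃ i : ℕ, ((i : ℕ∞) + 1) < n ∧ s(f i, f (i + 1)) ∈ M

/-- Condition (A): for every matching `M` and every vertex `s` not in the support
of `M` there is an `M`-augmenting path starting at `s`. -/
def ConditionA (G : SimpleGraph V) : Prop :=
  ∀ M : Set (Sym2 V), IsMatching G M → ∀ s : V, s ∉ supp M →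
    ∃ (n : ℕ∞) (f : ℕ → V), IsAugmentingPath G M n f s

/-- An independent matching: a matching admitting no proper augmenting path. -/
def IndepMatching (G : SimpleGraph V) (M : Set (Sym2 V)) : Prop :=
  IsMatching G M ∧
    ¬ ∃ (s : V) (n : ℕ∞) (f : ℕ → V), IsAugmentingPath G M n f s ∧ IsProper M n f

/-- The induced subgraph of `G` on the vertex set `S` (vertices outside `S`
become isolated). -/
def restrict (G : SimpleGraph V) (S : Set V) : SimpleGraph V where
  Adj u v := G.Adj u v ∧ u ∈ S ∧ v ∈ S
  symm := by
    constructor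
    intro u v h
    exact ⟨h.1.symm, h.2.2, h.2.1⟩
  loopless := by
    constructor
    intro v h
    exact G.ne_of_adj h.1 rfl

/-- `W` is an independent subgraph of `G`: the induced subgraph `G[W]` has a perfect
matching (i.e. `G` has a matching with support exactly `W`) and every such matching
is an independent matching of `G`. -/
def IndepSubgraph (G : SimpleGraph V) (W : Set V) : Prop :=
  (∃ M, IsMatching G M ∧ supp M = W) ∧
  ∀ M, IsMatching G M → supp M = W → IndepMatching G M

/-- The induced subgraph `G[W]` satisfies condition (A): for every matching of
`G[W]` and every vertex of `W` not in its support, there is an augmenting path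
inside `G[W]`. -/
def ConditionAOn (G : SimpleGraph V) (W : Set V) : Prop :=
  ∀ M : Set (Sym2 V), IsMatching (restrict G W) M → ∀ s ∈ W, s ∉ supp M →
    ∃ (n : ℕ∞) (f : ℕ → V), IsAugmentingPath (restrict G W) M n f s


section Aux

open Classical in
/-- The partner of `v` in an edge set `N`: some `w` with `s(v,w) ∈ N`, if any. -/
noncomputable def pmate (N : Set (Sym2 V)) (v : V) : V :=
  if h : ∃ w, s(v, w) ∈ N then h.choose else v

lemma pmate_mem {N : Set (Sym2 V)} {v : V} (h : ∃ w, s(v, w) ∈ N) :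
    s(v, pmate N v) ∈ N := by
  rw [pmate, dif_pos h]
  exact h.choose_spec

lemma mem_supp_iff {N : Set (Sym2 V)} {v : V} : v ∈ supp N ↔ ∃ w, s(v, w) ∈ N := by
  constructor
  · rintro ⟨e, heN, hv⟩
    induction e with
    | _ a b =>
      rcases Sym2.mem_iff.mp hv with rfl | rfl
      · exact ⟨b, heN⟩
      · exact ⟨a, by rwa [Sym2.eq_swap]⟩
  · rintro ⟨w, hw⟩
    exact ⟨_, hw, Sym2.mem_mk_left _ _⟩

/-- uniqueness property of a matching -/
def Uniq (N : Set (Sym2 V)) : Prop :=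
  ∀ (x : V), ∀ e ∈ N, ∀ e' ∈ N, x ∈ e → x ∈ e' → e = e'

lemma pmate_eq {N : Set (Sym2 V)} (hu : Uniq N) {v w : V} (h : s(v, w) ∈ N) :
    pmate N v = w := by
  have h2 := pmate_mem ⟨w, h⟩
  have h3 := hu v _ h2 _ h (Sym2.mem_mk_left _ _) (Sym2.mem_mk_left _ _)
  exact Sym2.congr_right.mp h3

lemma pmate_mem_of_supp {N : Set (Sym2 V)} {v : V} (h : v ∈ supp N) :
    s(v, pmate N v) ∈ N := pmate_mem (mem_supp_iff.mp h)

end Aux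
/-- Key lemma: if `M` and `M₀` are matchings with the same support and `M` admits a
proper augmenting path, then so does `M₀`. -/
lemma key {V : Type*} (G : SimpleGraph V) (W : Set V) (M M₀ : Set (Sym2 V))
    (hM : IsMatching G M) (hWM : supp M = W)
    (hM₀ : IsMatching G M₀) (hW₀ : supp M₀ = W)
    (s : V) (n : ℕ∞) (f : ℕ → V)
    (haug : IsAugmentingPath G M n f s) (hprop : IsProper M n f) :
    ∃ (s' : V) (n' : ℕ∞) (g : ℕ → V),
      IsAugmentingPath G M₀ n' g s' ∧ IsProper M₀ n' g := by
  classical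
  obtain ⟨⟨-, hfinj, hfadj⟩, halt, h1n, hf0, hsM, hlast⟩ := haug
  have hsW : s ∉ W := hWM ▸ hsM
  have hsM₀ : s ∉ supp M₀ := hW₀ ▸ hsW
  -- cast helpers
  have hcast : ∀ i : ℕ, ((i : ℕ∞) + 1) = (((i + 1 : ℕ)) : ℕ∞) := by
    intro i; push_cast; ring
  have hcast2 : ∀ i : ℕ, ((i : ℕ∞) + 2) = (((i + 2 : ℕ)) : ℕ∞) := by
    intro i; push_cast; ring
  have hbnd : ∀ a b : ℕ, a ≤ b → ((b : ℕ∞)) < n → ((a : ℕ∞)) < n :=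
    fun a b h hb => lt_of_le_of_lt (by exact_mod_cast h) hb
  have hsucc : ∀ a : ℕ, (((a : ℕ∞) + 1) < n) ↔ (((a + 1 : ℕ) : ℕ∞) < n) :=
    fun a => by rw [hcast a]
  have h2succ : ∀ a : ℕ, (((a : ℕ∞) + 2) < n) ↔ (((a + 2 : ℕ) : ℕ∞) < n) :=
    fun a => by rw [hcast2 a]
  have hparity : ∀ m : ℕ, ¬ Even m → Odd m := by
    intro m h
    rw [Nat.odd_iff]
    rcases Nat.even_or_odd m with h2 | h2
    · exact absurd h2 h
    · exact Nat.odd_iff.mp h2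
  -- pattern of path edges
  have hpat : ∀ i : ℕ, ((i : ℕ∞) + 1) < n → (s(f i, f (i + 1)) ∈ M ↔ Odd i) := by
    intro i
    induction i with
    | zero =>
      intro _
      have h0 : s(f 0, f 1) ∉ M := fun h =>
        hsM ⟨_, h, by rw [← hf0]; exact Sym2.mem_mk_left _ _⟩
      exact iff_of_false h0 (by simp [Nat.odd_iff])
    | succ i ih =>
      intro hb
      have hb2 : ((i : ℕ∞) + 2) < n := by
        rw [h2succ]
        exact (hsucc (i+1)).mp hb
      have hb1 : ((i : ℕ∞) + 1) < n := by
        rw [hsucc]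
        exact hbnd _ _ (by omega) ((h2succ i).mp hb2)
      have h := halt i hb2
      rw [Nat.odd_add_one, ← ih hb1]
      constructor
      · intro hmem hMi
        exact (h.mp hMi) hmem
      · intro hnot
        by_contra hc
        exact hnot (h.mpr hc)
  -- F5 : either two more vertices fit after edge j, or f (j+1) is the last vertex
  have hF5 : ∀ j : ℕ, ((j : ℕ∞) + 1) < n →
      (((j : ℕ∞) + 2) < n ∨ f (j + 1) ∉ supp M) := by
    intro j hb
    cases n with
    | top =>
      left
      exact lt_of_le_of_ne le_top (by rw [hcast2 j]; exact ENat.coe_ne_top _)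
    | coe m =>
      have hb' : j + 1 < m := by
        have := (hsucc j).mp hb
        exact_mod_cast this
      rcases lt_or_eq_of_le (Nat.succ_le_of_lt hb') with h | h
      · left
        rw [h2succ]
        exact_mod_cast h
      · right
        exact hlast (j+1) (by exact_mod_cast h.symm)
  have hF4 : ∀ i : ℕ, Odd i → ((i : ℕ∞) + 1) < n → ((i : ℕ∞) + 2) < n := by
    intro i hodd hb
    rcases hF5 i hb with h | h
    · exact h
    · exact absurd ⟨_, (hpat i hb).mpr hodd, Sym2.mem_mk_right _ _⟩ h
  -- n > 2
  obtain ⟨i₀, hi₀b, hi₀M⟩ := hprop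
  have hi₀odd : Odd i₀ := (hpat i₀ hi₀b).mp hi₀M
  have h11 : ((1 : ℕ) : ℕ∞) + 1 < n := by
    rw [hsucc]
    exact hbnd _ _ (by have := Nat.odd_iff.mp hi₀odd; omega : 1 + 1 ≤ i₀ + 1) ((hsucc i₀).mp hi₀b)
  have h01 : ((0 : ℕ) : ℕ∞) + 1 < n := by
    rw [hsucc]
    exact hbnd _ _ (by omega) ((hsucc 1).mp h11)
  have hf1W : f 1 ∈ W := by
    rw [← hWM]
    exact ⟨_, (hpat 1 h11).mpr odd_one, Sym2.mem_mk_left _ _⟩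
  -- the modified matching M'
  set Podd : Set (Sym2 V) :=
    {e | ∃ i : ℕ, Odd i ∧ ((i : ℕ∞) + 1) < n ∧ e = s(f i, f (i + 1))} with hPodd
  set Pev : Set (Sym2 V) :=
    {e | ∃ i : ℕ, Even i ∧ ((i : ℕ∞) + 1) < n ∧ e = s(f i, f (i + 1))} with hPev
  set M' : Set (Sym2 V) := (M \ Podd) ∪ Pev with hM'def
  have hM'G : M' ⊆ G.edgeSet := by
    rintro e (⟨heM, -⟩ | ⟨i, -, hb, rfl⟩)
    · exact hM.1 heM
    · exact hfadj i hb
  -- mixed-case impossibility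
  have hmixed : ∀ e ∈ M, e ∉ Podd → ∀ j : ℕ, Even j → ((j : ℕ∞) + 1) < n →
      ∀ v, v ∈ e → v ∈ s(f j, f (j + 1)) → False := by
    intro e heM hePodd j hjev hjb v hve hvp
    rcases Sym2.mem_iff.mp hvp with hv | hv
    · -- v = f j
      rcases Nat.eq_zero_or_pos j with rfl | hj
      · exact hsM ⟨e, heM, (hv.trans hf0) ▸ hve⟩
      · obtain ⟨t, rfl⟩ : ∃ t, j = t + 1 := ⟨j - 1, by omega⟩
        have htodd : Odd t := by
          rw [Nat.odd_iff]; have := Nat.even_iff.mp hjev; omega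
        have htb : ((t : ℕ∞) + 1) < n := by
          rw [hsucc]
          exact hbnd _ _ (by omega) ((hsucc (t+1)).mp hjb)
        have het : s(f t, f (t + 1)) ∈ M := (hpat t htb).mpr htodd
        have heq := hM.2 v e heM _ het hve (hv ▸ Sym2.mem_mk_right _ _)
        exact hePodd ⟨t, htodd, htb, heq⟩
    · -- v = f (j+1)
      rcases hF5 j hjb with hb2 | hns
      · have hb' : (((j + 1 : ℕ)) : ℕ∞) + 1 < n := by
          rw [hsucc]
          exact hbnd _ _ (by omega) ((h2succ j).mp hb2)
        have het : s(f (j + 1), f (j + 2)) ∈ M := (hpat (j+1) hb').mpr hjev.add_one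
        have heq := hM.2 v e heM _ het hve (hv ▸ Sym2.mem_mk_left _ _)
        exact hePodd ⟨j + 1, hjev.add_one, hb', heq⟩
      · exact hns ⟨e, heM, hv ▸ hve⟩
  -- M' is a "matching" (uniqueness)
  have hM'u : Uniq M' := by
    rintro v e (⟨heM, heP⟩ | ⟨i, hiev, hib, rfl⟩) e' he' hve hve'
    · rcases he' with ⟨he'M, he'P⟩ | ⟨j, hjev, hjb, rfl⟩
      · exact hM.2 v e heM e' he'M hve hve'
      · exact (hmixed e heM heP j hjev hjb v hve hve').elim
    · rcases he' with ⟨he'M, he'P⟩ | ⟨j, hjev, hjb, rfl⟩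
      · exact (hmixed e' he'M he'P i hiev hib v hve' hve).elim
      · have hbi : ((i : ℕ∞)) < n := hbnd _ _ (by omega) ((hsucc i).mp hib)
        have hbi1 : (((i+1 : ℕ)) : ℕ∞) < n := (hsucc i).mp hib
        have hbj : ((j : ℕ∞)) < n := hbnd _ _ (by omega) ((hsucc j).mp hjb)
        have hbj1 : (((j+1 : ℕ)) : ℕ∞) < n := (hsucc j).mp hjb
        have hie := Nat.even_iff.mp hiev
        have hje := Nat.even_iff.mp hjev
        rcases Sym2.mem_iff.mp hve with hv | hv <;>
          rcases Sym2.mem_iff.mp hve' with hv' | hv'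
        · obtain rfl : i = j := hfinj i j hbi hbj (hv.symm.trans hv'); rfl
        · exact absurd (hfinj i (j+1) hbi hbj1 (hv.symm.trans hv')) (by omega)
        · exact absurd (hfinj (i+1) j hbi1 hbj (hv.symm.trans hv')) (by omega)
        · obtain rfl : i = j := by
            have := hfinj (i+1) (j+1) hbi1 hbj1 (hv.symm.trans hv'); omega
          rfl
  -- every vertex of W is in supp M'
  have hWsupp' : ∀ v ∈ W, v ∈ supp M' := by
    intro v hv
    obtain ⟨w, hw⟩ := mem_supp_iff.mp (show v ∈ supp M from hWM ▸ hv)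
    by_cases hP : s(v, w) ∈ Podd
    · obtain ⟨i, hiodd, hib, hei⟩ := hP
      have hvi : v = f i ∨ v = f (i + 1) :=
        Sym2.mem_iff.mp (hei ▸ Sym2.mem_mk_left v w)
      rcases hvi with hv' | hv'
      · obtain ⟨t, rfl⟩ : ∃ t, i = t + 1 := ⟨i - 1, by have := Nat.odd_iff.mp hiodd; omega⟩
        have htev : Even t := by
          rw [Nat.even_iff]; have := Nat.odd_iff.mp hiodd; omega
        have htb : ((t : ℕ∞) + 1) < n := by
          rw [hsucc]
          exact hbnd _ _ (by omega) ((hsucc (t+1)).mp hib)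
        exact ⟨_, Or.inr ⟨t, htev, htb, rfl⟩, hv' ▸ Sym2.mem_mk_right _ _⟩
      · have hb2 := hF4 i hiodd hib
        have hb' : (((i + 1 : ℕ)) : ℕ∞) + 1 < n := by
          rw [hsucc]
          exact hbnd _ _ (by omega) ((h2succ i).mp hb2)
        exact ⟨_, Or.inr ⟨i + 1, hiodd.add_one, hb', rfl⟩, hv' ▸ Sym2.mem_mk_left _ _⟩
    · exact ⟨_, Or.inl ⟨hw, hP⟩, Sym2.mem_mk_left _ _⟩
  -- s has partner f 1 in M'
  have he0 : s(s, f 1) ∈ M' := by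
    rw [← hf0]
    exact Or.inr ⟨0, Even.zero, h01, rfl⟩
  have hs' : s ∈ supp M' := ⟨_, he0, Sym2.mem_mk_left _ _⟩
  -- the alternating walk
  set q : V → V := pmate M' with hq
  set p : V → V := pmate M₀ with hp
  set g : ℕ → V := fun i => Nat.rec s (fun i prev => if Even i then q prev else p prev) i
    with hgdef
  have hg0 : g 0 = s := rfl
  have hgsucc : ∀ i : ℕ, g (i + 1) = if Even i then q (g i) else p (g i) := fun i => rfl
  have hg1 : g 1 = f 1 := by
    have h1 : g 1 = if Even 0 then q (g 0) else p (g 0) := hgsucc 0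
    rw [h1, if_pos Even.zero, hg0]
    exact pmate_eq hM'u he0
  -- L2: edge membership pattern along the walk
  have hL2 : ∀ i : ℕ, (∀ t, Odd t → t < i → g t ∈ W) →
      (Even i → s(g i, g (i+1)) ∈ M' ∧ s(g i, g (i+1)) ∉ M₀) ∧
      (Odd i → g i ∈ W → s(g i, g (i+1)) ∈ M₀ ∧ s(g i, g (i+1)) ∉ M') := by
    intro i
    induction i using Nat.strong_induction_on with
    | _ i IH =>
      intro hD
      constructor
      · intro hiev
        have hstep : g (i+1) = q (g i) := by rw [hgsucc i, if_pos hiev]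
        have hgiW' : g i ∈ supp M' := by
          rcases Nat.eq_zero_or_pos i with rfl | hi
          · exact hg0 ▸ hs'
          · obtain ⟨t, rfl⟩ : ∃ t, i = t + 1 := ⟨i - 1, by omega⟩
            have htodd : Odd t := by
              rw [Nat.odd_iff]; have := Nat.even_iff.mp hiev; omega
            have htW : g t ∈ W := hD t htodd (Nat.lt_succ_self t)
            have hEt := ((IH t (Nat.lt_succ_self t)
              (fun t' h1 h2 => hD t' h1 (h2.trans (Nat.lt_succ_self t)))).2 htodd htW).1
            exact hWsupp' _ (hW₀ ▸ (⟨_, hEt, Sym2.mem_mk_right _ _⟩ : g (t+1) ∈ supp M₀))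
        have hEi : s(g i, g (i+1)) ∈ M' := by
          rw [hstep]; exact pmate_mem_of_supp hgiW'
        refine ⟨hEi, ?_⟩
        intro hmem
        rcases Nat.eq_zero_or_pos i with rfl | hi
        · exact hsM₀ ⟨_, hmem, hg0 ▸ Sym2.mem_mk_left _ _⟩
        · obtain ⟨t, rfl⟩ : ∃ t, i = t + 1 := ⟨i - 1, by omega⟩
          have htodd : Odd t := by
            rw [Nat.odd_iff]; have := Nat.even_iff.mp hiev; omega
          have htW : g t ∈ W := hD t htodd (Nat.lt_succ_self t)
          have hprev := (IH t (Nat.lt_succ_self t)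
            (fun t' h1 h2 => hD t' h1 (h2.trans (Nat.lt_succ_self t)))).2 htodd htW
          have heq := hM₀.2 (g (t+1)) _ hmem _ hprev.1
            (Sym2.mem_mk_left _ _) (Sym2.mem_mk_right _ _)
          rcases Sym2.eq_iff.mp heq with ⟨h1, h2⟩ | ⟨h1, h2⟩
          · exact (show G.Adj (g (t+1)) (g (t+1+1)) from hM'G hEi).ne h2.symm
          · rw [h2, Sym2.eq_swap] at hEi
            exact hprev.2 hEi
      · intro hiodd hiW
        have hstep : g (i+1) = p (g i) := by
          rw [hgsucc i, if_neg (by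
            intro h
            have h1 := Nat.even_iff.mp h
            have h2 := Nat.odd_iff.mp hiodd
            omega)]
        have hEi : s(g i, g (i+1)) ∈ M₀ := by
          rw [hstep]; exact pmate_mem_of_supp (show g i ∈ supp M₀ from hW₀ ▸ hiW)
        refine ⟨hEi, ?_⟩
        intro hmem
        obtain ⟨t, rfl⟩ : ∃ t, i = t + 1 :=
          ⟨i - 1, by have := Nat.odd_iff.mp hiodd; omega⟩
        have htev : Even t := by
          rw [Nat.even_iff]; have := Nat.odd_iff.mp hiodd; omega
        have hprev := (IH t (Nat.lt_succ_self t)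
          (fun t' h1 h2 => hD t' h1 (h2.trans (Nat.lt_succ_self t)))).1 htev
        have heq := hM'u (g (t+1)) _ hmem _ hprev.1
          (Sym2.mem_mk_left _ _) (Sym2.mem_mk_right _ _)
        rcases Sym2.eq_iff.mp heq with ⟨h1, h2⟩ | ⟨h1, h2⟩
        · exact (show G.Adj (g (t+1)) (g (t+1+1)) from hM₀.1 hEi).ne h2.symm
        · rw [h2, Sym2.eq_swap] at hEi
          exact hprev.2 hEi
  -- L3: injectivity of the walk
  have hL3 : ∀ j : ℕ, (∀ t, Odd t → t < j → g t ∈ W) → ∀ i, i < j → g i ≠ g j := by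
    intro j
    induction j using Nat.strong_induction_on with
    | _ j IH =>
      intro hD i hij heq
      obtain ⟨j', rfl⟩ : ∃ j', j = j' + 1 := ⟨j - 1, by omega⟩
      have hD' : ∀ t, Odd t → t < j' → g t ∈ W := fun t h1 h2 => hD t h1 (by omega)
      have hij' : i ≤ j' := by omega
      by_cases hj'ev : Even j'
      · -- last edge is in M'
        have hE := (hL2 j' hD').1 hj'ev
        have hne : g j' ≠ g (j'+1) :=
          (show G.Adj (g j') (g (j'+1)) from hM'G hE.1).ne
        rcases Nat.lt_or_ge i j' with hlt | hge
        · by_cases hiev : Even i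
          · have hEi := (hL2 i (fun t h1 h2 => hD t h1 (by omega))).1 hiev
            have hkey := hM'u (g (j'+1)) _ hE.1 _ hEi.1 (Sym2.mem_mk_right _ _)
              (by rw [← heq]; exact Sym2.mem_mk_left _ _)
            rcases Sym2.eq_iff.mp hkey with ⟨h1, h2⟩ | ⟨h1, h2⟩
            · exact IH j' (Nat.lt_succ_self _) hD' i hlt h1.symm
            · rcases Nat.lt_or_ge (i+1) j' with hlt2 | hge2
              · exact IH j' (Nat.lt_succ_self _) hD' (i+1) hlt2 h1.symm
              · have : i + 1 = j' := by omega
                have h3 := Nat.even_iff.mp hiev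
                have h4 := Nat.even_iff.mp hj'ev
                omega
          · have hiodd := hparity i hiev
            obtain ⟨t, rfl⟩ : ∃ t, i = t + 1 :=
              ⟨i - 1, by have := Nat.odd_iff.mp hiodd; omega⟩
            have htev : Even t := by
              rw [Nat.even_iff]; have := Nat.odd_iff.mp hiodd; omega
            have hEt := (hL2 t (fun t' h1 h2 => hD t' h1 (by omega))).1 htev
            have hkey := hM'u (g (j'+1)) _ hE.1 _ hEt.1 (Sym2.mem_mk_right _ _)
              (by rw [← heq]; exact Sym2.mem_mk_right _ _)
            rcases Sym2.eq_iff.mp hkey with ⟨h1, h2⟩ | ⟨h1, h2⟩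
            · exact IH j' (Nat.lt_succ_self _) hD' t (by omega) h1.symm
            · exact IH j' (Nat.lt_succ_self _) hD' (t+1) hlt h1.symm
        · obtain rfl : i = j' := by omega
          exact hne heq
      · -- last edge is in M₀
        have hj'odd := hparity j' hj'ev
        have hE := (hL2 j' hD').2 hj'odd (hD j' hj'odd (Nat.lt_succ_self _))
        have hne : g j' ≠ g (j'+1) :=
          (show G.Adj (g j') (g (j'+1)) from hM₀.1 hE.1).ne
        rcases Nat.lt_or_ge i j' with hlt | hge
        · by_cases hiev : Even i
          · rcases Nat.eq_zero_or_pos i with rfl | hi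
            · refine hsM₀ ⟨_, hE.1, ?_⟩
              have hseq : s = g (j'+1) := by rw [← hg0]; exact heq
              rw [hseq]
              exact Sym2.mem_mk_right _ _
            · obtain ⟨t, rfl⟩ : ∃ t, i = t + 1 := ⟨i - 1, by omega⟩
              have htodd : Odd t := by
                rw [Nat.odd_iff]; have := Nat.even_iff.mp hiev; omega
              have hEt := (hL2 t (fun t' h1 h2 => hD t' h1 (by omega))).2 htodd
                (hD t htodd (by omega))
              have hkey := hM₀.2 (g (j'+1)) _ hE.1 _ hEt.1 (Sym2.mem_mk_right _ _)
                (by rw [← heq]; exact Sym2.mem_mk_right _ _)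
              rcases Sym2.eq_iff.mp hkey with ⟨h1, h2⟩ | ⟨h1, h2⟩
              · exact IH j' (Nat.lt_succ_self _) hD' t (by omega) h1.symm
              · exact IH j' (Nat.lt_succ_self _) hD' (t+1) hlt h1.symm
          · have hiodd := hparity i hiev
            have hEi := (hL2 i (fun t h1 h2 => hD t h1 (by omega))).2 hiodd
              (hD i hiodd (by omega))
            have hkey := hM₀.2 (g (j'+1)) _ hE.1 _ hEi.1 (Sym2.mem_mk_right _ _)
              (by rw [← heq]; exact Sym2.mem_mk_left _ _)
            rcases Sym2.eq_iff.mp hkey with ⟨h1, h2⟩ | ⟨h1, h2⟩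
            · exact IH j' (Nat.lt_succ_self _) hD' i hlt h1.symm
            · rcases Nat.lt_or_ge (i+1) j' with hlt2 | hge2
              · exact IH j' (Nat.lt_succ_self _) hD' (i+1) hlt2 h1.symm
              · have : i + 1 = j' := by omega
                have h3 := Nat.odd_iff.mp hiodd
                have h4 := Nat.odd_iff.mp hj'odd
                omega
        · obtain rfl : i = j' := by omega
          exact hne heq
  -- adjacency along the walk
  have hgadj : ∀ i : ℕ, (∀ t, Odd t → t ≤ i → g t ∈ W) → G.Adj (g i) (g (i+1)) := by
    intro i hD
    by_cases hiev : Even i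
    · exact hM'G ((hL2 i (fun t a b => hD t a (by omega))).1 hiev).1
    · have hiodd := hparity i hiev
      exact hM₀.1 ((hL2 i (fun t a b => hD t a (by omega))).2 hiodd (hD i hiodd le_rfl)).1
  -- alternation along the walk
  have hgalt : ∀ i : ℕ, (∀ t, Odd t → t ≤ i + 1 → g t ∈ W) →
      (s(g i, g (i+1)) ∈ M₀ ↔ s(g (i+1), g (i+2)) ∉ M₀) := by
    intro i hD
    by_cases hiev : Even i
    · have h1 := (hL2 i (fun t a b => hD t a (by omega))).1 hiev
      have h2 := (hL2 (i+1) (fun t a b => hD t a (by omega))).2 hiev.add_one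
        (hD (i+1) hiev.add_one le_rfl)
      exact iff_of_false h1.2 (not_not_intro h2.1)
    · have hiodd := hparity i hiev
      have h1 := (hL2 i (fun t a b => hD t a (by omega))).2 hiodd
        (hD i hiodd (by omega))
      have h2 := (hL2 (i+1) (fun t a b => hD t a (by omega))).1 hiodd.add_one
      exact iff_of_true h1.1 h2.2
  -- assemble the augmenting path for M₀
  have hlttop : ∀ a : ℕ∞, a ≠ ⊤ → a < ⊤ := fun a h => lt_of_le_of_ne le_top h
  by_cases hall : ∀ t, Odd t → g t ∈ W
  · -- infinite augmenting path
    refine ⟨s, ⊤, g, ⟨⟨le_top, ?_, ?_⟩, ?_, ?_, hg0, hsM₀, ?_⟩, ⟨1, ?_, ?_⟩⟩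
    · intro i j _ _ hij
      rcases lt_trichotomy i j with h | h | h
      · exact absurd hij (hL3 j (fun t a _ => hall t a) i h)
      · exact h
      · exact absurd hij.symm (hL3 i (fun t a _ => hall t a) j h)
    · intro i _
      exact hgadj i (fun t a _ => hall t a)
    · intro i _
      exact hgalt i (fun t a _ => hall t a)
    · exact hlttop 1 (by simp)
    · intro k hk
      rw [hcast k] at hk
      exact absurd hk.symm (ENat.coe_ne_top _)
    · exact hlttop _ (by rw [show ((1:ℕ):ℕ∞) + 1 = ((2:ℕ):ℕ∞) from by push_cast; ring]; exact ENat.coe_ne_top _)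
    · exact ((hL2 1 (by
        intro t ht h2
        exact absurd h2 (by have := Nat.odd_iff.mp ht; omega))).2 odd_one
          (by rw [hg1]; exact hf1W)).1
  · -- finite augmenting path
    push_neg at hall
    have hex : ∃ t, Odd t ∧ g t ∉ W := hall
    obtain ⟨j, ⟨hjodd, hjW⟩, hmin⟩ :
        ∃ j, (Odd j ∧ g j ∉ W) ∧ ∀ t, t < j → ¬(Odd t ∧ g t ∉ W) :=
      ⟨Nat.find hex, Nat.find_spec hex, fun t ht => Nat.find_min hex ht⟩
    have hDj : ∀ t, Odd t → t < j → g t ∈ W := by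
      intro t ht hlt
      by_contra hc
      exact hmin t hlt ⟨ht, hc⟩
    have hj1 : j ≠ 1 := by
      intro h
      rw [h, hg1] at hjW
      exact hjW hf1W
    have hj3 : 3 ≤ j := by
      have := Nat.odd_iff.mp hjodd
      omega
    have hDle : ∀ b : ℕ, b ≤ j → ∀ t, Odd t → t < b → g t ∈ W :=
      fun b hb t h1 h2 => hDj t h1 (by omega)
    refine ⟨s, (j : ℕ∞) + 1, g, ⟨⟨le_add_self, ?_, ?_⟩, ?_, ?_, hg0, hsM₀, ?_⟩, ⟨1, ?_, ?_⟩⟩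
    · intro a b ha hb hab
      have ha' : a ≤ j := by
        rw [hcast j] at ha
        exact_mod_cast Nat.lt_succ_iff.mp (by exact_mod_cast ha)
      have hb' : b ≤ j := by
        rw [hcast j] at hb
        exact_mod_cast Nat.lt_succ_iff.mp (by exact_mod_cast hb)
      rcases lt_trichotomy a b with h | h | h
      · exact absurd hab (hL3 b (hDle b hb') a h)
      · exact h
      · exact absurd hab.symm (hL3 a (hDle a ha') b h)
    · intro i hb
      have hb' : i < j := by
        rw [hcast i, hcast j] at hb
        have h2 : i + 1 < j + 1 := by exact_mod_cast hb
        omega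
      exact hgadj i (fun t a b => hDj t a (by omega))
    · intro i hb
      have hb' : i + 2 < j + 1 := by
        rw [hcast2 i, hcast j] at hb
        exact_mod_cast hb
      exact hgalt i (fun t a b => hDj t a (by omega))
    · exact_mod_cast (show ((1:ℕ):ℕ∞) < ((j+1:ℕ):ℕ∞) from by exact_mod_cast (by omega : 1 < j + 1))
    · intro k hk
      have hjk : j = k := by
        rw [hcast j, hcast k] at hk
        have : j + 1 = k + 1 := by exact_mod_cast hk
        omega
      rw [← hjk, hW₀]
      exact hjW
    · show ((1:ℕ):ℕ∞) + 1 < (j : ℕ∞) + 1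
      rw [hcast 1, hcast j]
      exact_mod_cast (by omega : 1 + 1 < j + 1)
    · exact ((hL2 1 (by
        intro t ht h2
        exact absurd h2 (by have := Nat.odd_iff.mp ht; omega))).2 odd_one
          (by rw [hg1]; exact hf1W)).1

/-- `W` is an independent subgraph of `G` iff `G[W]` has a perfect
matching which is an independent matching of `G`. -/
theorem indepSubgraph_iff_exists_indep_perfect_matching {V : Type*} [Countable V]
    (G : SimpleGraph V) (W : Set V) :
    IndepSubgraph G W ↔
      ∃ M : Set (Sym2 V), IsMatching G M ∧ supp M = W ∧ IndepMatching G M := by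
  constructor
  · rintro ⟨⟨M, hM, hsupp⟩, hall⟩
    exact ⟨M, hM, hsupp, hall M hM hsupp⟩
  · rintro ⟨M₀, hM₀, hW₀, hind₀⟩
    refine ⟨⟨M₀, hM₀, hW₀⟩, ?_⟩
    intro M hM hWM
    refine ⟨hM, ?_⟩
    rintro ⟨s, n, f, haug, hprop⟩
    exact hind₀.2 (key G W M M₀ hM hWM hM₀ hW₀ s n f haug hprop)

end PaperMatchings
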